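/- Let 0 < q < 1 and d ∈ ℂ. For every s ∈ ℕ and every symmetric polynomial F ∈ ℂ[t_0,…,t_s], there exists a polynomial G ∈ ℂ[x] such that for all z ∈ ℂ∖{0}: F( η_d(z), η_d(qz), …, η_d(q^s z) ) = G( η_{d q^s}(z) ). (Any symmetric polynomial in the q-Racah sinusoidal coordinates at x, x+1, …, x+s is a polynomial in the parameter-shifted coordinate.) -/

import Mathlib

open Polynomial

lemma peq (P Q : Polynomial ℂ) (h : ∀ z : ℂ, z ≠ 0 → P.eval z = Q.eval z) : P = Q := by
  have h0 : ({x : ℂ | (P - Q).IsRoot x}).Infinite := by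
    apply Set.Infinite.mono (s := {(0:ℂ)}ᶜ)
    · intro z hz
      simp only [Set.mem_setOf_eq, IsRoot, eval_sub]
      simp [h z hz]
    · exact Set.Finite.infinite_compl (Set.finite_singleton 0)
  exact sub_eq_zero.mp (Polynomial.eq_zero_of_infinite_isRoot _ h0)

lemma key (e : ℂ) (he : e ≠ 0) :
    ∀ n : ℕ, ∀ P : Polynomial ℂ, P.natDegree ≤ 2*n →
      (∀ z : ℂ, z ≠ 0 → P.eval z = e^n * z^(2*n) * P.eval ((e*z)⁻¹)) →
      ∃ G : Polynomial ℂ, ∀ z : ℂ, z ≠ 0 →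
        P.eval z = z^n * G.eval ((z⁻¹-1)*(1-e*z)) := by
  intro n
  induction n with
  | zero =>
    intro P hdeg _
    refine ⟨Polynomial.C (P.coeff 0), fun z hz => ?_⟩
    have hP := Polynomial.eq_C_of_natDegree_le_zero (show P.natDegree ≤ 0 by simpa using hdeg)
    rw [hP]; simp
  | succ n ih =>
    intro P hdeg hrefl
    set c : ℂ := P.coeff 0 with hc
    set R : Polynomial ℂ := (1 - Polynomial.X) * (1 - Polynomial.C e * Polynomial.X) with hRdef
    have hRform : R = Polynomial.C e * Polynomial.X^2 + Polynomial.C (-(1+e)) * Polynomial.X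
        + Polynomial.C 1 := by
      rw [hRdef]; simp only [map_neg, map_add, C_1]; ring
    have hReval : ∀ z : ℂ, R.eval z = (1 - z) * (1 - e*z) := by
      intro z; simp [hRdef]
    have hRz : ∀ z : ℂ, z ≠ 0 → R.eval z = z * ((z⁻¹-1)*(1-e*z)) := by
      intro z hz; rw [hReval]; field_simp
    have hRstep : ∀ z : ℂ, z ≠ 0 → R.eval z = e * z^2 * R.eval ((e*z)⁻¹) := by
      intro z hz
      rw [hReval, hReval]
      field_simp
      ring
    have hRdeg : R.natDegree = 2 := by
      rw [hRform]
      compute_degree!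
    have hRlead : R.coeff 2 = e := by
      rw [hRform]
      simp [Polynomial.coeff_one]
    -- coefficient identity from the reflection condition
    have hdeg' : P.natDegree < 2*n+3 := by omega
    set M : Polynomial ℂ := ∑ i ∈ Finset.range (2*n+3),
        Polynomial.C (e^(n+1) * (e⁻¹)^i * P.coeff i) * Polynomial.X^(2*n+2 - i) with hMdef
    have hPM : P = M := by
      apply peq
      intro z hz
      have hez : (e*z)⁻¹ ≠ 0 := by simp [he, hz]
      rw [hrefl z hz, Polynomial.eval_eq_sum_range' hdeg' ((e*z)⁻¹), hMdef]
      rw [Polynomial.eval_finset_sum, Finset.mul_sum]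
      apply Finset.sum_congr rfl
      intro i hi
      simp only [Finset.mem_range] at hi
      have hile : i ≤ 2*n+2 := by omega
      have hzp : z^(2*n+2-i) * z^i = z^(2*n+2) := by
        rw [← pow_add]; congr 1; omega
      simp only [Polynomial.eval_mul, Polynomial.eval_C, Polynomial.eval_pow, Polynomial.eval_X]
      have h2 : 2*(n+1) = 2*n+2 := by ring
      rw [h2]
      field_simp
      rw [← hzp]
      have hzi : z^i * z⁻¹^i = 1 := by rw [← mul_pow, mul_inv_cancel₀ hz, one_pow]
      linear_combination (z^(2*n+2-i) * P.coeff i * e⁻¹^i) * hzi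
    have hc2 : P.coeff (2*n+2) = e^(n+1) * c := by
      rw [hPM, hMdef, Polynomial.finset_sum_coeff]
      rw [Finset.sum_eq_single 0]
      · rw [Polynomial.coeff_C_mul, Polynomial.coeff_X_pow]
        simp [hc]
      · intro i hi hi0
        simp only [Finset.mem_range] at hi
        rw [Polynomial.coeff_C_mul, Polynomial.coeff_X_pow]
        have : ¬ (2*n+2 = 2*n+2-i) := by omega
        simp [this]
      · intro h; simp at h
    -- Q and its properties
    set Q : Polynomial ℂ := P - Polynomial.C c * R^(n+1) with hQdef
    have hRpow0 : (R^(n+1)).coeff 0 = 1 := by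
      rw [Polynomial.coeff_zero_eq_eval_zero]
      simp [hRdef]
    have hQ0 : Q.coeff 0 = 0 := by
      rw [hQdef]
      simp [Polynomial.coeff_sub, Polynomial.coeff_C_mul, hRpow0, hc]
    have hRpowdeg : (R^(n+1)).natDegree = 2*n+2 := by
      rw [Polynomial.natDegree_pow, hRdeg]; ring
    have hRpowtop : (R^(n+1)).coeff (2*n+2) = e^(n+1) := by
      have h1 : (R^(n+1)).coeff (2*n+2) = (R^(n+1)).leadingCoeff := by
        rw [Polynomial.leadingCoeff, hRpowdeg]
      rw [h1, Polynomial.leadingCoeff_pow]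
      have : R.leadingCoeff = e := by
        rw [Polynomial.leadingCoeff, hRdeg, hRlead]
      rw [this]
    have hQtop : Q.coeff (2*n+2) = 0 := by
      rw [hQdef]
      rw [Polynomial.coeff_sub, Polynomial.coeff_C_mul, hRpowtop, hc2]
      ring
    have hQdeg : Q.natDegree ≤ 2*n+2 := by
      apply le_trans (Polynomial.natDegree_sub_le _ _)
      apply max_le (by omega)
      apply le_trans (Polynomial.natDegree_mul_le)
      simp [hRpowdeg]
    have hQdeg' : Q.natDegree ≤ 2*n+1 := by
      rw [Polynomial.natDegree_le_iff_coeff_eq_zero]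
      intro m hm
      rcases eq_or_lt_of_le (show 2*n+2 ≤ m by omega) with h | h
      · rw [← h]; exact hQtop
      · exact Polynomial.coeff_eq_zero_of_natDegree_lt (by omega)
    set Q' : Polynomial ℂ := Q.divX with hQ'def
    have hXQ : Polynomial.X * Q' = Q := by
      have := Polynomial.X_mul_divX_add Q
      rw [hQ0] at this
      simpa using this
    have hQ'deg : Q'.natDegree ≤ 2*n := by
      rw [Polynomial.natDegree_le_iff_coeff_eq_zero]
      intro m hm
      rw [hQ'def, Polynomial.coeff_divX]
      exact Polynomial.natDegree_le_iff_coeff_eq_zero.mp hQdeg' _ (by omega)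
    -- reflection for R^(n+1)
    have hRpowrefl : ∀ z : ℂ, z ≠ 0 →
        (R^(n+1)).eval z = e^(n+1) * z^(2*(n+1)) * (R^(n+1)).eval ((e*z)⁻¹) := by
      intro z hz
      rw [Polynomial.eval_pow, Polynomial.eval_pow, hRstep z hz]
      ring
    have hQrefl : ∀ z : ℂ, z ≠ 0 →
        Q.eval z = e^(n+1) * z^(2*(n+1)) * Q.eval ((e*z)⁻¹) := by
      intro z hz
      rw [hQdef]
      simp only [Polynomial.eval_sub, Polynomial.eval_mul, Polynomial.eval_C]
      rw [hrefl z hz, hRpowrefl z hz]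
      ring
    have hQ'refl : ∀ z : ℂ, z ≠ 0 →
        Q'.eval z = e^n * z^(2*n) * Q'.eval ((e*z)⁻¹) := by
      intro z hz
      have h1 : z * Q'.eval z = Q.eval z := by
        rw [← hXQ]; simp
      have hez : (e*z) ≠ 0 := mul_ne_zero he hz
      have h2 : (e*z)⁻¹ * Q'.eval ((e*z)⁻¹) = Q.eval ((e*z)⁻¹) := by
        rw [← hXQ]; simp
      apply mul_left_cancel₀ hz
      rw [h1, hQrefl z hz, ← h2]
      field_simp
      ring
    obtain ⟨G', hG'⟩ := ih Q' hQ'deg hQ'refl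
    refine ⟨Polynomial.C c * Polynomial.X^(n+1) + G', fun z hz => ?_⟩
    have hPdecomp : P = Polynomial.C c * R^(n+1) + Polynomial.X * Q' := by
      rw [hXQ, hQdef]; ring
    rw [hPdecomp]
    simp only [Polynomial.eval_add, Polynomial.eval_mul, Polynomial.eval_C,
      Polynomial.eval_pow, Polynomial.eval_X]
    rw [hRz z hz, hG' z hz]
    generalize (z⁻¹ - 1) * (1 - e * z) = t
    ring

open Polynomial

lemma exists_rep (m : ℕ) (v : Fin m → ℂ → ℂ) (p : Fin m → Polynomial ℂ)
    (hp : ∀ j, (p j).natDegree ≤ 2)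
    (hv : ∀ j (z : ℂ), z ≠ 0 → z * v j z = (p j).eval z)
    (F : MvPolynomial (Fin m) ℂ) :
    ∃ (n : ℕ) (P : Polynomial ℂ), P.natDegree ≤ 2*n ∧
      ∀ z : ℂ, z ≠ 0 → P.eval z = z^n * MvPolynomial.eval (fun j => v j z) F := by
  induction F using MvPolynomial.induction_on with
  | C a =>
    exact ⟨0, Polynomial.C a, by simp, fun z hz => by simp⟩
  | add f g hf hg =>
    obtain ⟨n₁, P₁, hd₁, he₁⟩ := hf
    obtain ⟨n₂, P₂, hd₂, he₂⟩ := hg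
    refine ⟨n₁ + n₂, P₁ * Polynomial.X^n₂ + P₂ * Polynomial.X^n₁, ?_, fun z hz => ?_⟩
    · apply le_trans (Polynomial.natDegree_add_le _ _)
      apply max_le
      · apply le_trans (Polynomial.natDegree_mul_le)
        simp only [Polynomial.natDegree_X_pow]
        omega
      · apply le_trans (Polynomial.natDegree_mul_le)
        simp only [Polynomial.natDegree_X_pow]
        omega
    · simp only [Polynomial.eval_add, Polynomial.eval_mul, Polynomial.eval_pow,
        Polynomial.eval_X, MvPolynomial.eval_add]
      rw [he₁ z hz, he₂ z hz, pow_add]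
      ring
  | mul_X f j hf =>
    obtain ⟨n, P, hd, he⟩ := hf
    refine ⟨n + 1, P * p j, ?_, fun z hz => ?_⟩
    · apply le_trans (Polynomial.natDegree_mul_le)
      have := hp j
      omega
    · simp only [Polynomial.eval_mul, MvPolynomial.eval_mul, MvPolynomial.eval_X]
      rw [he z hz, ← hv j z hz]
      ring

lemma coord_inv (d a b z : ℂ) (hd : d ≠ 0) (ha : a ≠ 0) (hb : b ≠ 0) (hz : z ≠ 0) :
    ((a * (d * (b * a) * z)⁻¹)⁻¹ - 1) * (1 - d * (a * (d * (b * a) * z)⁻¹))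
      = ((b * z)⁻¹ - 1) * (1 - d * (b * z)) := by
  have h1 : a * (d * (b * a) * z)⁻¹ = (d * (b * z))⁻¹ := by
    rw [mul_inv, mul_inv, mul_inv]
    field_simp
  rw [h1, inv_inv]
  have h2 : d * (d * (b * z))⁻¹ = (b * z)⁻¹ := by
    rw [mul_inv]
    field_simp
  rw [h2]
  have hbz : b * z ≠ 0 := mul_ne_zero hb hz
  field_simp
  ring

example (s : ℕ) (F : MvPolynomial (Fin (s+1)) ℂ) (g : Fin (s+1) → Polynomial ℂ) (t : ℂ) :
    Polynomial.eval t (MvPolynomial.aeval g F)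
      = MvPolynomial.eval (fun j => Polynomial.eval t (g j)) F := by
  have h := MvPolynomial.comp_aeval (φ := Polynomial.aeval t) (f := g)
  have h2 := DFunLike.congr_fun h F
  simpa using h2
open Polynomial

section helpers

private lemma peq' (P Q : Polynomial ℂ) (h : ∀ z : ℂ, z ≠ 0 → P.eval z = Q.eval z) : P = Q := by
  have h0 : ({x : ℂ | (P - Q).IsRoot x}).Infinite := by
    apply Set.Infinite.mono (s := {(0:ℂ)}ᶜ)
    · intro z hz
      simp only [Set.mem_setOf_eq, IsRoot, eval_sub]
      simp [h z hz]
    · exact Set.Finite.infinite_compl (Set.finite_singleton 0)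
  exact sub_eq_zero.mp (Polynomial.eq_zero_of_infinite_isRoot _ h0)

end helpers


/-- Any symmetric polynomial in the q-Racah sinusoidal coordinates
`η_d(z), η_d(qz), …, η_d(q^s z)` (multiplicative variable `z = q^x`,
`η_e(z) = (z⁻¹-1)(1-ez)`) is a polynomial in the parameter-shifted coordinate
`η_{dq^s}(z) = (z⁻¹-1)(1-dq^s z)`. -/
theorem qracah_symmetric_poly_in_shifted_eta (q : ℝ) (hq : 0 < q) (hq1 : q < 1)
    (d : ℂ) (s : ℕ) (F : MvPolynomial (Fin (s + 1)) ℂ) (hF : F.IsSymmetric) :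
    ∃ G : Polynomial ℂ, ∀ z : ℂ, z ≠ 0 →
      MvPolynomial.eval
          (fun j : Fin (s + 1) =>
            (((q : ℂ) ^ (j : ℕ) * z)⁻¹ - 1) * (1 - d * ((q : ℂ) ^ (j : ℕ) * z))) F
        = G.eval ((z⁻¹ - 1) * (1 - d * (q : ℂ) ^ s * z)) := by
  have hq0 : (q : ℂ) ≠ 0 := by
    exact_mod_cast ne_of_gt hq
  have hqj : ∀ k : ℕ, (q : ℂ)^k ≠ 0 := fun k => pow_ne_zero k hq0
  by_cases hd : d = 0
  · -- degenerate case d = 0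
    subst hd
    refine ⟨MvPolynomial.aeval
      (fun j : Fin (s+1) => Polynomial.C ((q:ℂ)⁻¹^(j:ℕ)) * (Polynomial.X + 1) - 1) F,
      fun z hz => ?_⟩
    have harg : (z⁻¹ - 1) * (1 - 0 * (q : ℂ) ^ s * z) = z⁻¹ - 1 := by ring
    rw [harg]
    have h := MvPolynomial.comp_aeval (φ := Polynomial.aeval (z⁻¹ - 1))
      (f := fun j : Fin (s+1) => Polynomial.C ((q:ℂ)⁻¹^(j:ℕ)) * (Polynomial.X + 1) - 1)
    have h2 := DFunLike.congr_fun h F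
    simp only [AlgHom.coe_comp, Function.comp_apply] at h2
    have h3 : Polynomial.eval (z⁻¹ - 1) (MvPolynomial.aeval
        (fun j : Fin (s+1) => Polynomial.C ((q:ℂ)⁻¹^(j:ℕ)) * (Polynomial.X + 1) - 1) F)
        = MvPolynomial.eval (fun j : Fin (s+1) =>
            Polynomial.eval (z⁻¹ - 1) (Polynomial.C ((q:ℂ)⁻¹^(j:ℕ)) * (Polynomial.X + 1) - 1)) F := by
      simpa using h2
    rw [h3]
    have hfun : (fun j : Fin (s+1) =>
        (((q : ℂ) ^ (j : ℕ) * z)⁻¹ - 1) * (1 - 0 * ((q : ℂ) ^ (j : ℕ) * z)))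
        = fun j : Fin (s+1) => Polynomial.eval (z⁻¹ - 1)
            (Polynomial.C ((q:ℂ)⁻¹^(j:ℕ)) * (Polynomial.X + 1) - 1) := by
      funext j
      simp only [Polynomial.eval_sub, Polynomial.eval_mul, Polynomial.eval_C,
        Polynomial.eval_add, Polynomial.eval_X, Polynomial.eval_one]
      rw [mul_inv, inv_pow]
      ring
    rw [hfun]
  · -- main case d ≠ 0
    set e : ℂ := d * (q : ℂ)^s with hedef
    have he0 : e ≠ 0 := mul_ne_zero hd (hqj s)
    set v : Fin (s+1) → ℂ → ℂ := fun j z =>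
      (((q : ℂ) ^ (j : ℕ) * z)⁻¹ - 1) * (1 - d * ((q : ℂ) ^ (j : ℕ) * z)) with hvdef
    -- invariance under z ↦ (e z)⁻¹
    have hinv : ∀ z : ℂ, z ≠ 0 →
        MvPolynomial.eval (fun j => v j ((e*z)⁻¹)) F
          = MvPolynomial.eval (fun j => v j z) F := by
      intro z hz
      have hfun : (fun j => v j ((e*z)⁻¹)) = (fun j => v j z) ∘ Fin.revPerm := by
        funext j
        have hj : (j:ℕ) ≤ s := Nat.lt_succ_iff.mp j.isLt
        have hrevval : ((Fin.revPerm j : Fin (s+1)) : ℕ) = s - (j:ℕ) := by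
          simp only [Fin.revPerm_apply, Fin.val_rev]
          omega
        show v j ((e*z)⁻¹) = v (Fin.revPerm j) z
        have hba : (q:ℂ)^(s - (j:ℕ)) * (q:ℂ)^(j:ℕ) = (q:ℂ)^s := by
          rw [← pow_add]; congr 1; omega
        have hee : e = d * ((q:ℂ)^(s - (j:ℕ)) * (q:ℂ)^(j:ℕ)) := by
          rw [hedef, hba]
        have key := coord_inv d ((q:ℂ)^(j:ℕ)) ((q:ℂ)^(s - (j:ℕ))) z hd (hqj _) (hqj _) hz
        simp only [hvdef, Function.comp_apply, hrevval]
        rw [hee]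
        exact key
      rw [hfun, ← MvPolynomial.eval_rename, hF Fin.revPerm]
    -- Laurent representation
    obtain ⟨n, P, hPdeg, hPe⟩ := exists_rep (s+1) v
      (fun j => (Polynomial.C ((q:ℂ)⁻¹^(j:ℕ)) - Polynomial.X)
        * (1 - Polynomial.C (d * (q:ℂ)^(j:ℕ)) * Polynomial.X))
      (fun j => by
        apply le_trans (Polynomial.natDegree_mul_le)
        have h1 : (Polynomial.C ((q:ℂ)⁻¹^(j:ℕ)) - Polynomial.X).natDegree ≤ 1 := by
          apply le_trans (Polynomial.natDegree_sub_le _ _)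
          simp only [Polynomial.natDegree_C, Polynomial.natDegree_X]
          omega
        have h2 : ((1 : Polynomial ℂ) - Polynomial.C (d * (q:ℂ)^(j:ℕ)) * Polynomial.X).natDegree ≤ 1 := by
          apply le_trans (Polynomial.natDegree_sub_le _ _)
          apply max_le (by simp)
          apply le_trans (Polynomial.natDegree_mul_le)
          simp only [Polynomial.natDegree_C, Polynomial.natDegree_X]
          omega
        omega)
      (fun j z hz => by
        simp only [hvdef, Polynomial.eval_mul, Polynomial.eval_sub, Polynomial.eval_C,
          Polynomial.eval_X, Polynomial.eval_one]
        have hinvj : ((q:ℂ)^(j:ℕ) * z)⁻¹ = (q:ℂ)⁻¹^(j:ℕ) * z⁻¹ := by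
          rw [mul_inv, inv_pow]
        rw [hinvj]
        field_simp)
      F
    -- reflection property of P
    have hrefl : ∀ z : ℂ, z ≠ 0 → P.eval z = e^n * z^(2*n) * P.eval ((e*z)⁻¹) := by
      intro z hz
      have hez : (e*z)⁻¹ ≠ 0 := inv_ne_zero (mul_ne_zero he0 hz)
      rw [hPe z hz, hPe _ hez, hinv z hz]
      have h2n : z^(2*n) = z^n * z^n := by rw [← pow_add]; congr 1; omega
      rw [h2n, mul_inv, ← mul_inv, inv_pow, mul_pow]
      field_simp
      ring
    obtain ⟨G, hG⟩ := key e he0 n P hPdeg hrefl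
    refine ⟨G, fun z hz => ?_⟩
    have h1 := (hPe z hz).symm.trans (hG z hz)
    have h2 := mul_left_cancel₀ (pow_ne_zero n hz) h1
    rw [show (fun j : Fin (s+1) =>
      (((q : ℂ) ^ (j : ℕ) * z)⁻¹ - 1) * (1 - d * ((q : ℂ) ^ (j : ℕ) * z))) = fun j => v j z from rfl]
    rw [h2]
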